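/- Let (u_n)_{n<ω} be a sequence of nonempty finite words such that every finite product u₀u₁⋯u_n is a Lyndon word. Then the infinite word w = u₀u₁u₂⋯ satisfies w ≤lex z for every proper suffix z of w (where ≤lex is the lexicographic order on infinite words). -/
import Mathlib


/-- A finite word is a Lyndon word if it is nonempty and lexicographically
strictly smaller than all of its proper nonempty suffixes. -/
def IsLyndon {A : Type*} [LinearOrder A] (w : List A) : Prop :=
  w ≠ [] ∧ ∀ i : ℕ, 0 < i → i < w.length → w < w.drop i

/-- Lexicographic (non-strict) order on infinite words. -/
def InfLe {A : Type*} [LinearOrder A] (w z : ℕ → A) : Prop :=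
  w = z ∨ ∃ n : ℕ, (∀ m < n, w m = z m) ∧ w n < z n

private lemma lex_char {A : Type*} [LinearOrder A] :
    ∀ s t : List A, List.Lex (· < ·) s t →
    (∃ j, ∃ h1 : j < s.length, ∃ h2 : j < t.length,
      (∀ i (hi : i < j), s[i]'(by omega) = t[i]'(by omega)) ∧ s[j] < t[j]) ∨
    s.length < t.length := by
  intro s t h
  induction h with
  | nil => right; simp
  | @cons a l₁ l₂ h ih =>
    rcases ih with ⟨j, h1, h2, heq, hlt⟩ | hlen
    · left
      refine ⟨j + 1, by simpa using h1, by simpa using h2, ?_, by simpa using hlt⟩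
      intro i hi
      cases i with
      | zero => simp
      | succ i => simpa using heq i (by omega)
    · right; simpa using hlen
  | @rel a l₁ b l₂ hab =>
    left
    exact ⟨0, by simp, by simp, by omega, by simpa using hab⟩

private lemma getElem_idx_congr {A : Type*} (l : List A) {i j : ℕ} (h : i = j)
    (hi : i < l.length) : l[i] = l[j]'(h ▸ hi) := by subst h; rfl

private lemma len_flatten {A : Type*} (u : ℕ → List A) (hne : ∀ n, u n ≠ []) (m : ℕ) :
    m ≤ (((List.range m).map u).flatten).length := by
  induction m with
  | zero => simp
  | succ m ih =>
    rw [List.range_succ, List.map_append, List.flatten_append]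
    have : 0 < (u m).length := List.length_pos_iff.mpr (hne m)
    simp only [List.length_append]
    simp at *
    omega

theorem limit_of_lyndon_le_suffixes {A : Type*} [LinearOrder A]
    (u : ℕ → List A) (w : ℕ → A)
    (hne : ∀ n, u n ≠ [])
    (hly : ∀ n, IsLyndon (((List.range (n + 1)).map u).flatten))
    (hw : ∀ n, ∀ i : ℕ, (h : i < (((List.range n).map u).flatten).length) →
      w i = (((List.range n).map u).flatten).get ⟨i, h⟩) :
    ∀ k : ℕ, 1 ≤ k → InfLe w (fun n => w (n + k)) := by
  intro k hk
  set P : List A := ((List.range (k + 1)).map u).flatten with hP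
  have hlen : k + 1 ≤ P.length := len_flatten u hne (k + 1)
  obtain ⟨-, hly'⟩ := hly k
  simp only [← hP] at hly'
  have hlt : P < P.drop k := hly' k (by omega) (by omega)
  have hlex : List.Lex (· < ·) P (P.drop k) := hlt
  rcases lex_char P (P.drop k) hlex with ⟨j, h1, h2, heq, hjlt⟩ | hl
  · right
    have h2' : j + k < P.length := by
      have := h2; rw [List.length_drop] at this; omega
    have hwP : ∀ i (hi : i < P.length), w i = P[i] := by
      intro i hi
      simpa using hw (k + 1) i hi
    refine ⟨j, ?_, ?_⟩
    · intro m hm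
      have hm1 : m < P.length := by omega
      have hm2 : m + k < P.length := by omega
      show w m = w (m + k)
      rw [hwP m hm1, hwP (m + k) hm2]
      have := heq m hm
      rw [List.getElem_drop] at this
      rw [this]
      exact getElem_idx_congr P (by omega) _
    · have := hjlt
      rw [List.getElem_drop] at this
      show w j < w (j + k)
      rw [hwP j (by omega), hwP (j + k) h2',
        getElem_idx_congr P (show j + k = k + j by omega) h2']
      exact this
  · exfalso
    rw [List.length_drop] at hl
    omega
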